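/- Notional complementarity: the peak maps are strictly increasing. If 0 < y₁ < y₂ ≤ r_b then m_A(y₁) < m_A(y₂), and if 0 ≤ x₁ < x₂ < r_b then s_A(x₁) < s_A(x₂). -/
import Mathlib


open Set

/-- Notional complementarity: the peak maps `m_A` and `s_A` are strictly increasing. -/
theorem notional_complementarity
    (rhat rb Tmax : ℝ) (D S mA sA : ℝ → ℝ)
    (hrhat : 0 < rhat) (hrb : rhat < rb) (hTmax : 0 < Tmax)
    (hDc : ContinuousOn D (Icc 0 rb)) (hDm : StrictMonoOn D (Icc 0 rb))
    (hD0 : D 0 = 0) (hDr : D rhat = Tmax)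
    (hSc : ContinuousOn S (Icc 0 rb)) (hSa : StrictAntiOn S (Icc 0 rb))
    (hSb : S rb = 0) (hSr : S rhat = Tmax)
    (U : Set ℝ) (hUo : IsOpen U) (hU : Icc (0:ℝ) rb ⊆ U)
    (hD2 : ContDiffOn ℝ 2 D U) (hS2 : ContDiffOn ℝ 2 S U)
    (hD' : ∀ x ∈ Icc (0:ℝ) rb, 0 < deriv D x)
    (hD'' : ∀ x ∈ Icc (0:ℝ) rb, deriv (deriv D) x < 0)
    (hS' : ∀ x ∈ Icc (0:ℝ) rb, deriv S x < 0)
    (hS'' : ∀ x ∈ Icc (0:ℝ) rb, deriv (deriv S) x < 0)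
    (hmA : ∀ y ∈ Ioc (0:ℝ) rb, mA y ∈ Icc (0:ℝ) y ∧
      (∀ r ∈ Icc (0:ℝ) y, (y - r) * D r ≤ (y - mA y) * D (mA y)) ∧
      (∀ m ∈ Icc (0:ℝ) y,
        (∀ r ∈ Icc (0:ℝ) y, (y - r) * D r ≤ (y - m) * D m) → m = mA y))
    (hsA : ∀ x ∈ Ico (0:ℝ) rb, sA x ∈ Icc x rb ∧
      (∀ r ∈ Icc x rb, (r - x) * S r ≤ (sA x - x) * S (sA x)) ∧
      (∀ m ∈ Icc x rb,
        (∀ r ∈ Icc x rb, (r - x) * S r ≤ (m - x) * S m) → m = sA x)) :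
    (∀ y₁ y₂, 0 < y₁ → y₁ < y₂ → y₂ ≤ rb → mA y₁ < mA y₂) ∧
    (∀ x₁ x₂, 0 ≤ x₁ → x₁ < x₂ → x₂ < rb → sA x₁ < sA x₂) := by
  have hrb0 : (0:ℝ) < rb := hrhat.trans hrb
  -- differentiability
  have hDdiff : ∀ x ∈ Icc (0:ℝ) rb, HasDerivAt D (deriv D x) x := by
    intro x hx
    have : DifferentiableAt ℝ D x :=
      (hD2.differentiableOn (by norm_num)).differentiableAt (hUo.mem_nhds (hU hx))
    exact this.hasDerivAt
  have hSdiff : ∀ x ∈ Icc (0:ℝ) rb, HasDerivAt S (deriv S x) x := by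
    intro x hx
    have : DifferentiableAt ℝ S x :=
      (hS2.differentiableOn (by norm_num)).differentiableAt (hUo.mem_nhds (hU hx))
    exact this.hasDerivAt
  -- interiority and FOC for mA
  have mfoc : ∀ y ∈ Ioc (0:ℝ) rb, 0 < mA y ∧ mA y < y ∧
      D (mA y) = (y - mA y) * deriv D (mA y) := by
    intro y hy
    obtain ⟨hmem, hmax, _⟩ := hmA y hy
    set m := mA y with hmdef
    have hy0 : 0 < y := hy.1
    have hyrb : y ≤ rb := hy.2
    have hmrb : m ∈ Icc (0:ℝ) rb := ⟨hmem.1, hmem.2.trans hyrb⟩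
    -- value at y/2 is positive
    have hhalf : y / 2 ∈ Icc (0:ℝ) y := ⟨by linarith, by linarith⟩
    have hhalf' : y / 2 ∈ Icc (0:ℝ) rb := ⟨by linarith, by linarith⟩
    have hDhalf : 0 < D (y / 2) := by
      have := hDm (left_mem_Icc.2 hrb0.le) hhalf' (by linarith)
      linarith [this, hD0.symm ▸ this]
    have hpos : 0 < (y - m) * D m := by
      have h1 := hmax (y / 2) hhalf
      nlinarith
    have hDm0 : 0 ≤ D m := by
      have := hDm.monotoneOn (left_mem_Icc.2 hrb0.le) hmrb hmem.1
      linarith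
    have hym : m < y := by
      rcases lt_or_ge m y with h | h
      · exact h
      · exfalso; nlinarith
    have hm0 : 0 < m := by
      rcases lt_or_ge 0 m with h | h
      · exact h
      · exfalso
        have : m = 0 := le_antisymm h hmem.1
        rw [this, hD0] at hpos; nlinarith
    refine ⟨hm0, hym, ?_⟩
    -- first-order condition
    have hder : HasDerivAt (fun r => (y - r) * D r)
        ((0 - 1) * D m + (y - m) * deriv D m) m :=
      ((hasDerivAt_const m y).sub (hasDerivAt_id m)).mul (hDdiff m hmrb)
    have hloc : IsLocalMax (fun r => (y - r) * D r) m := by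
      have : IsMaxOn (fun r => (y - r) * D r) (Icc (0:ℝ) y) m := fun r hr => hmax r hr
      exact this.isLocalMax (Icc_mem_nhds hm0 hym)
    have := hloc.hasDerivAt_eq_zero hder
    linarith
  -- interiority and FOC for sA
  have sfoc : ∀ x ∈ Ico (0:ℝ) rb, x < sA x ∧ sA x < rb ∧
      S (sA x) = -((sA x - x) * deriv S (sA x)) := by
    intro x hx
    obtain ⟨hmem, hmax, _⟩ := hsA x hx
    set m := sA x with hmdef
    have hx0 : 0 ≤ x := hx.1
    have hxrb : x < rb := hx.2
    have hmrb : m ∈ Icc (0:ℝ) rb := ⟨hx0.trans hmem.1, hmem.2⟩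
    have hhalf : (x + rb) / 2 ∈ Icc x rb := ⟨by linarith, by linarith⟩
    have hhalf' : (x + rb) / 2 ∈ Icc (0:ℝ) rb := ⟨by linarith, by linarith⟩
    have hShalf : 0 < S ((x + rb) / 2) := by
      have := hSa hhalf' (right_mem_Icc.2 hrb0.le) (by linarith)
      linarith
    have hpos : 0 < (m - x) * S m := by
      have h1 := hmax ((x + rb) / 2) hhalf
      nlinarith
    have hSm0 : 0 ≤ S m := by
      have := hSa.antitoneOn hmrb (right_mem_Icc.2 hrb0.le) hmem.2
      linarith
    have hxm : x < m := by
      rcases lt_or_ge x m with h | h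
      · exact h
      · exfalso; nlinarith
    have hmr : m < rb := by
      rcases lt_or_ge m rb with h | h
      · exact h
      · exfalso
        have : m = rb := le_antisymm hmem.2 h
        rw [this, hSb] at hpos; nlinarith
    refine ⟨hxm, hmr, ?_⟩
    have hder : HasDerivAt (fun r => (r - x) * S r)
        ((1 - 0) * S m + (m - x) * deriv S m) m :=
      ((hasDerivAt_id m).sub (hasDerivAt_const m x)).mul (hSdiff m hmrb)
    have hloc : IsLocalMax (fun r => (r - x) * S r) m := by
      have : IsMaxOn (fun r => (r - x) * S r) (Icc x rb) m := fun r hr => hmax r hr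
      exact this.isLocalMax (Icc_mem_nhds hxm hmr)
    have := hloc.hasDerivAt_eq_zero hder
    linarith
  constructor
  · intro y₁ y₂ hy1 h12 h2rb
    have hy1m : y₁ ∈ Ioc (0:ℝ) rb := ⟨hy1, by linarith⟩
    have hy2m : y₂ ∈ Ioc (0:ℝ) rb := ⟨by linarith, h2rb⟩
    obtain ⟨hmem1, hmax1, _⟩ := hmA y₁ hy1m
    obtain ⟨hmem2, hmax2, _⟩ := hmA y₂ hy2m
    obtain ⟨hp1, hq1, hf1⟩ := mfoc y₁ hy1m
    obtain ⟨hp2, hq2, hf2⟩ := mfoc y₂ hy2m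
    by_contra hle
    push_neg at hle
    -- hle : mA y₂ ≤ mA y₁
    have h21 : mA y₂ ∈ Icc (0:ℝ) y₁ := ⟨hmem2.1, hle.trans hmem1.2⟩
    have h12' : mA y₁ ∈ Icc (0:ℝ) y₂ := ⟨hmem1.1, by linarith [hmem1.2]⟩
    have e1 := hmax1 (mA y₂) h21
    have e2 := hmax2 (mA y₁) h12'
    have hDle : D (mA y₁) ≤ D (mA y₂) := by nlinarith
    have heq : mA y₁ = mA y₂ := by
      rcases eq_or_lt_of_le hle with h | h
      · exact h.symm
      · exfalso
        have := hDm ⟨hmem2.1, hmem2.2.trans h2rb⟩ ⟨hmem1.1, hmem1.2.trans (by linarith)⟩ h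
        linarith
    have hdpos : 0 < deriv D (mA y₁) :=
      hD' (mA y₁) ⟨hmem1.1, hmem1.2.trans (by linarith)⟩
    rw [heq] at hf1 hdpos
    nlinarith [hf1, hf2, hdpos, h12]
  · intro x₁ x₂ hx1 h12 h2rb
    have hx1m : x₁ ∈ Ico (0:ℝ) rb := ⟨hx1, by linarith⟩
    have hx2m : x₂ ∈ Ico (0:ℝ) rb := ⟨by linarith, h2rb⟩
    obtain ⟨hmem1, hmax1, _⟩ := hsA x₁ hx1m
    obtain ⟨hmem2, hmax2, _⟩ := hsA x₂ hx2m
    obtain ⟨hp1, hq1, hf1⟩ := sfoc x₁ hx1m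
    obtain ⟨hp2, hq2, hf2⟩ := sfoc x₂ hx2m
    by_contra hle
    push_neg at hle
    -- hle : sA x₂ ≤ sA x₁
    have h21 : sA x₁ ∈ Icc x₂ rb := ⟨le_trans hp2.le hle, hmem1.2⟩
    have h12' : sA x₂ ∈ Icc x₁ rb := ⟨by linarith [hmem2.1], hmem2.2⟩
    have e1 := hmax1 (sA x₂) h12'
    have e2 := hmax2 (sA x₁) h21
    have hSle : S (sA x₂) ≤ S (sA x₁) := by nlinarith
    have heq : sA x₁ = sA x₂ := by
      rcases eq_or_lt_of_le hle with h | h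
      · exact h.symm
      · exfalso
        have := hSa ⟨le_trans hx1 (le_trans h12.le hp2.le), hmem2.2⟩
          ⟨hx1.trans hmem1.1, hmem1.2⟩ h
        linarith
    have hdneg : deriv S (sA x₁) < 0 :=
      hS' (sA x₁) ⟨hx1.trans hmem1.1, hmem1.2⟩
    rw [heq] at hf1 hdneg
    nlinarith [hf1, hf2, hdneg, h12]
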